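/- If an abelian group G exhibits the Specker phenomenon, then G is binding; in fact, if (a_n) witnesses the Specker phenomenon, then G binds the subgroup H generated by the a_n. -/

import Mathlib

open Cardinal

/-- `G` binds a subgroup `H` if every homomorphism from `G` to a free abelian
group maps `H` into a subgroup of finite rank. -/
def Binds.{u} {G : Type*} [AddCommGroup G] (H : AddSubgroup G) : Prop :=
  ∀ (ι : Type u) (f : G →+ (ι →₀ ℤ)), Module.rank ℤ (H.map f) < ℵ₀

theorem stmt_12.{u} {G : Type*} [AddCommGroup G] (a : ℕ → G)
    (hSpecker : ∀ f : G →+ ℤ, {n : ℕ | f (a n) ≠ 0}.Finite) :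
    Binds.{u} (AddSubgroup.closure (Set.range a)) := by
  classical
  intro ι f
  by_contra hrank
  set b : ℕ → (ι →₀ ℤ) := fun n => f (a n) with hb
  have key : ∀ (S : Finset ι) (N : ℕ), ∃ n, N ≤ n ∧ ∃ i ∈ (b n).support, i ∉ S := by
    intro S N
    by_contra hcon
    push_neg at hcon
    have hsupp : ∀ n, N ≤ n → ↑(b n).support ⊆ (S : Set ι) := fun n hn i hi => hcon n hn i hi
    set T : Set (ι →₀ ℤ) := (b '' Set.Iio N) ∪ (fun i => Finsupp.single i (1:ℤ)) '' S with hT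
    have hTfin : T.Finite := ((Set.finite_Iio N).image b).union (S.finite_toSet.image _)
    have hle : (AddSubgroup.closure (Set.range a)).map f ≤ (Submodule.span ℤ T).toAddSubgroup := by
      rw [AddMonoidHom.map_closure, AddSubgroup.closure_le]
      rintro x ⟨y, ⟨n, rfl⟩, rfl⟩
      show b n ∈ Submodule.span ℤ T
      rcases lt_or_ge n N with h | h
      · exact Submodule.subset_span (Or.inl ⟨n, h, rfl⟩)
      · have : b n ∈ Finsupp.supported ℤ ℤ (S : Set ι) :=
          (Finsupp.mem_supported ℤ _).2 (hsupp n h)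
        rw [Finsupp.supported_eq_span_single] at this
        exact Submodule.span_mono (Set.subset_union_right) this
    have : Module.rank ℤ ((AddSubgroup.closure (Set.range a)).map f) ≤
        Module.rank ℤ (Submodule.span ℤ T) := by
      refine LinearMap.rank_le_of_injective
        (AddMonoidHom.toIntLinearMap ⟨⟨fun x => ⟨x.1, hle x.2⟩, rfl⟩, fun x y => rfl⟩) ?_
      intro x y h
      exact Subtype.ext (congrArg (fun z => z.1) h)
    exact hrank (this.trans_lt ((rank_span_le T).trans_lt hTfin.lt_aleph0))
  choose m hmge pi hpimem hpinot using key
  -- iterative construction of a partial functional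
  let step : ℕ × Finset ι × (ι → ℤ) → ℕ × Finset ι × (ι → ℤ) := fun p =>
    let N := p.1; let S := p.2.1; let c := p.2.2
    let n := m S N
    let i := pi S N
    let A : ℤ := ∑ j ∈ S, (b n) j * c j
    let t : ℤ := (A.natAbs : ℤ) + 1
    (n + 1, S ∪ (b n).support,
      fun j => if j ∈ (b n).support ∧ j ∉ S then (if j = i then t else 0) else c j)
  let st : ℕ → ℕ × Finset ι × (ι → ℤ) := fun k => step^[k] (0, ∅, fun _ => 0)
  have hst : ∀ k, st (k+1) = step (st k) := fun k => Function.iterate_succ_apply' step k _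
  set N : ℕ → ℕ := fun k => (st k).1 with hN
  set S : ℕ → Finset ι := fun k => (st k).2.1 with hS
  set c : ℕ → ι → ℤ := fun k => (st k).2.2 with hc
  set n : ℕ → ℕ := fun k => m (S k) (N k) with hn
  have hNsucc : ∀ k, N (k+1) = n k + 1 := fun k => by
    show (st (k+1)).1 = _; rw [hst k]
  have hSsucc : ∀ k, S (k+1) = S k ∪ (b (n k)).support := fun k => by
    show (st (k+1)).2.1 = _; rw [hst k]
  have hcsucc : ∀ k, c (k+1) = fun j =>
      if j ∈ (b (n k)).support ∧ j ∉ S k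
      then (if j = pi (S k) (N k) then (((∑ j ∈ S k, (b (n k)) j * c k j).natAbs : ℤ) + 1) else 0)
      else c k j := fun k => by
    show (st (k+1)).2.2 = _; rw [hst k]
  have hSmono : ∀ {k l : ℕ}, k ≤ l → S k ⊆ S l := by
    intro k l hkl
    induction hkl with
    | refl => rfl
    | step h ih => exact ih.trans (by rw [hSsucc]; exact Finset.subset_union_left)
  have hsuppS : ∀ k, (b (n k)).support ⊆ S (k+1) := fun k => by
    rw [hSsucc]; exact Finset.subset_union_right
  have hmono : StrictMono n := strictMono_nat_of_lt_succ fun k => by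
    have h1 := hmge (S (k+1)) (N (k+1))
    have h2 : n (k+1) = m (S (k+1)) (N (k+1)) := rfl
    have h3 : N (k+1) = n k + 1 := hNsucc k
    omega
  have hstab : ∀ k l, k ≤ l → ∀ j ∈ S k, c l j = c k j := by
    intro k l hkl
    induction l with
    | zero => intro j hj; rw [Nat.le_zero.mp hkl]
    | succ l ih =>
      intro j hj
      rcases Nat.eq_or_lt_of_le hkl with h | h
      · rw [h]
      · have hkk : k ≤ l := by omega
        have hjS : j ∈ S l := hSmono hkk hj
        rw [hcsucc l]
        simp only [hjS, not_true_eq_false, and_false, if_false]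
        exact ih hkk j hj
  let clim : ι → ℤ := fun j => if h : ∃ k, j ∈ S k then c h.choose j else 0
  have hclim : ∀ k j, j ∈ S k → clim j = c k j := by
    intro k j hj
    have h : ∃ k, j ∈ S k := ⟨k, hj⟩
    show dite _ _ _ = _
    rw [dif_pos h]
    rcases le_total h.choose k with hle | hle
    · exact (hstab h.choose k hle j h.choose_spec).symm
    · exact hstab k h.choose hle j hj
  have hne : ∀ k, ((b (n k)).sum fun j x => x • clim j) ≠ 0 := by
    intro k
    set i := pi (S k) (N k) with hi
    set A : ℤ := ∑ j ∈ S k, (b (n k)) j * c k j with hA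
    set t : ℤ := (A.natAbs : ℤ) + 1 with ht
    have hisupp : i ∈ (b (n k)).support := hpimem (S k) (N k)
    have hinot : i ∉ S k := hpinot (S k) (N k)
    have hbi : (b (n k)) i ≠ 0 := Finsupp.mem_support_iff.mp hisupp
    -- rewrite the sum using c (k+1)
    have e1 : ((b (n k)).sum fun j x => x • clim j)
        = ∑ j ∈ (b (n k)).support, (b (n k)) j * c (k+1) j := by
      rw [Finsupp.sum]
      refine Finset.sum_congr rfl fun j hj => ?_
      rw [smul_eq_mul, hclim (k+1) j (hsuppS k hj)]
    have e2 : ∑ j ∈ (b (n k)).support, (b (n k)) j * c (k+1) j = A + (b (n k)) i * t := by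
      rw [← Finset.sum_filter_add_sum_filter_not ((b (n k)).support) (· ∈ S k)]
      congr 1
      · -- over support ∩ S k, c (k+1) = c k, and extend to all of S k
        rw [hA]
        rw [← Finset.sum_subset (fun j hj => (Finset.mem_filter.mp hj).2 :
            (b (n k)).support.filter (· ∈ S k) ⊆ S k)]
        · refine Finset.sum_congr rfl fun j hj => ?_
          have hjS : j ∈ S k := (Finset.mem_filter.mp hj).2
          rw [hcsucc k]
          simp only [hjS, not_true_eq_false, and_false, if_false]
        · intro j hjS hjn
          have : (b (n k)) j = 0 := by
            by_contra hne0
            exact hjn (Finset.mem_filter.mpr ⟨Finsupp.mem_support_iff.mpr hne0, hjS⟩)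
          rw [this, zero_mul]
      · -- over support \ S k : only the i-term
        rw [Finset.sum_eq_single i]
        · rw [hcsucc k]
          simp only [hisupp, hinot, not_false_eq_true, and_self, if_true, if_pos hi, ← hA, ← ht]
        · intro j hj hji
          have hjsupp : j ∈ (b (n k)).support := (Finset.mem_filter.mp hj).1
          have hjnot : j ∉ S k := (Finset.mem_filter.mp hj).2
          rw [hcsucc k]
          simp only [hjsupp, hjnot, not_false_eq_true, and_self, if_true, ← hi, if_neg hji, mul_zero]
        · intro hni
          exact absurd (Finset.mem_filter.mpr ⟨hisupp, hinot⟩) hni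
    rw [e1, e2]
    intro h0
    have habs : |A| = |(b (n k)) i| * t := by
      have : A = -((b (n k)) i * t) := by linarith
      rw [this, abs_neg, abs_mul, abs_of_pos (show (0:ℤ) < t by positivity)]
    have h1 : (1:ℤ) ≤ |(b (n k)) i| := Int.one_le_abs hbi
    have h2 : |A| = (t - 1) := by rw [ht, Int.natCast_natAbs]; ring
    nlinarith
  -- contradiction with Specker
  let F : G →+ ℤ := (Finsupp.linearCombination ℤ clim).toAddMonoidHom.comp f
  have hsub : Set.range n ⊆ {p : ℕ | F (a p) ≠ 0} := by
    rintro _ ⟨k, rfl⟩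
    show F (a (n k)) ≠ 0
    have : F (a (n k)) = (b (n k)).sum fun j x => x • clim j :=
      Finsupp.linearCombination_apply ℤ (b (n k))
    rw [this]
    exact hne k
  exact Set.infinite_range_of_injective hmono.injective ((hSpecker F).subset hsub)
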